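/- Frank–Wolfe convergence with errors: let f_k be a sequence of concave functions on a convex set D ⊂ ℝ^n, each β-smooth (f_k(x+v) ≥ f_k(x)+⟨v,∇f_k(x)⟩−β‖v‖₂² for x, x+v ∈ D), ‖∇f_k‖_∞ ≤ B and f_k ≤ B on D, diameter of D at most 2 in ℓ₂. Suppose iterates satisfy d_{k} = (1−η)d_{k−1} + η u_k where ⟨u_k, ∇f_k(d_{k−1})⟩ ≥ ⟨d*, ∇f_k(d_{k−1})⟩ − ε₀ for a fixed d* ∈ D, and max_{d∈D} |f_{k+1}(d) − f_k(d)| ≤ δ_k with Σ_{i=0}^k (1−η)^i δ_{k−i} ≤ Δ for all k. Then f_{K+1}(d*) − f_{K+1}(d_K) ≤ 2B e^{−ηK} + ε₀ + 4ηβ + 2Δ. -/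

import Mathlib

open InnerProductSpace

-- fderiv applied = inner with gradient
lemma grad_fderiv {n : ℕ} (f : EuclideanSpace ℝ (Fin n) → ℝ)
    (hf : Differentiable ℝ f) (x v : EuclideanSpace ℝ (Fin n)) :
    fderiv ℝ f x v = (inner ℝ (gradient f x) v : ℝ) := by
  have h := (hf x).hasGradientAt
  rw [hasGradientAt_iff_hasFDerivAt] at h
  rw [h.fderiv]
  simp [InnerProductSpace.toDual_apply_apply]

-- concavity gradient inequality
lemma concave_grad_ineq {n : ℕ} {D : Set (EuclideanSpace ℝ (Fin n))}
    (f : EuclideanSpace ℝ (Fin n) → ℝ)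
    (hconc : ConcaveOn ℝ D f) (hf : Differentiable ℝ f)
    {x y : EuclideanSpace ℝ (Fin n)} (hx : x ∈ D) (hy : y ∈ D) :
    f y - f x ≤ (inner ℝ (y - x) (gradient f x) : ℝ) := by
  set g : ℝ → ℝ := fun t => f (x + t • (y - x)) with hg
  have hline : ∀ t : ℝ, HasDerivAt (fun t : ℝ => x + t • (y - x)) (y - x) t := by
    intro t
    simpa using ((hasDerivAt_id t).smul_const (y - x)).const_add x
  have hgd : HasDerivAt g (fderiv ℝ f x (y - x)) 0 := by
    have := ((hf (x + (0:ℝ) • (y - x))).hasFDerivAt.comp_hasDerivAt 0 (hline 0))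
    simpa [hg, Function.comp_def] using this
  have hquot : ∀ t ∈ Set.Ioo (0:ℝ) 1, f y - f x ≤ (g t - g 0) / t := by
    intro t ht
    have hmem : x + t • (y - x) = (1 - t) • x + t • y := by module
    have := hconc.2 hx hy (by linarith [ht.2] : (0:ℝ) ≤ 1 - t) ht.1.le (by ring)
    rw [← hmem] at this
    rw [le_div_iff₀ ht.1]
    simp only [hg, smul_eq_mul, zero_smul, add_zero] at this ⊢
    nlinarith [this]
  have hslope : Filter.Tendsto (fun t => (g t - g 0) / t) (nhdsWithin 0 (Set.Ioi 0))
      (nhds (fderiv ℝ f x (y - x))) := by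
    have := hasDerivAt_iff_tendsto_slope.mp hgd
    refine this.mono_left (nhdsWithin_mono 0 ?_) |>.congr' ?_
    · intro t ht; simp at ht ⊢; exact ne_of_gt ht
    · filter_upwards [self_mem_nhdsWithin] with t ht
      simp [slope_def_field, div_eq_inv_mul]
  have hle : f y - f x ≤ fderiv ℝ f x (y - x) := by
    refine ge_of_tendsto hslope ?_
    filter_upwards [Ioo_mem_nhdsGT_of_mem (by norm_num : (0:ℝ) ∈ Set.Ico (0:ℝ) 1)] with t ht
    exact hquot t ht
  rw [grad_fderiv f hf] at hle
  rwa [real_inner_comm]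

theorem stmt_11 {n : ℕ} (D : Set (EuclideanSpace ℝ (Fin n)))
    (hD : Convex ℝ D)
    (hdiam : ∀ x ∈ D, ∀ y ∈ D, ‖x - y‖ ≤ 2)
    (f : ℕ → EuclideanSpace ℝ (Fin n) → ℝ)
    (β B Δ ε₀ η : ℝ) (hβ : 0 < β) (hB : 0 < B) (hΔ : 0 < Δ)
    (hε₀ : 0 ≤ ε₀) (hη : η ∈ Set.Ioo (0:ℝ) 1)
    (hconc : ∀ k, ConcaveOn ℝ D (f k))
    (hdiff : ∀ k, Differentiable ℝ (f k))
    (hsmooth : ∀ k, ∀ x v : EuclideanSpace ℝ (Fin n), x ∈ D → x + v ∈ D →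
      f k (x + v) ≥ f k x + (inner ℝ v (gradient (f k) x) : ℝ) - β * ‖v‖ ^ 2)
    (hfB : ∀ k, ∀ x ∈ D, |f k x| ≤ B)
    (hgB : ∀ k, ∀ x ∈ D, ∀ i : Fin n, |gradient (f k) x i| ≤ B)
    (d u : ℕ → EuclideanSpace ℝ (Fin n)) (dstar : EuclideanSpace ℝ (Fin n))
    (hd0 : d 0 ∈ D) (hu : ∀ k, u k ∈ D) (hdstar : dstar ∈ D)
    (hiter : ∀ k, d (k + 1) = (1 - η) • d k + η • u (k + 1))
    (hplan : ∀ k, (inner ℝ (u (k + 1)) (gradient (f (k + 1)) (d k)) : ℝ)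
        ≥ (inner ℝ dstar (gradient (f (k + 1)) (d k)) : ℝ) - ε₀)
    (δ : ℕ → ℝ)
    (hdrift : ∀ k, ∀ x ∈ D, |f (k + 1) x - f k x| ≤ δ k)
    (hδsum : ∀ k, ∑ i ∈ Finset.range (k + 1), (1 - η) ^ i * δ (k - i) ≤ Δ) :
    ∀ K : ℕ, 1 ≤ K →
      f (K + 1) dstar - f (K + 1) (d K)
        ≤ 2 * B * Real.exp (-η * K) + ε₀ + 4 * η * β + 2 * Δ := by
  obtain ⟨hη0, hη1⟩ := hη
  have hdmem : ∀ k, d k ∈ D := by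
    intro k
    induction k with
    | zero => exact hd0
    | succ k ih =>
      rw [hiter k]
      exact hD ih (hu (k + 1)) (by linarith) hη0.le (by ring)
  have hδ0 : 0 ≤ δ 0 := le_trans (abs_nonneg _) (hdrift 0 (d 0) hd0)
  set c : ℝ := η * ε₀ + 4 * β * η ^ 2 with hc
  set g : ℕ → ℝ := fun k => f (k + 1) dstar - f (k + 1) (d k) with hgdef
  have hstep : ∀ k, g (k + 1) ≤ (1 - η) * g k + c + 2 * δ (k + 1) := by
    intro k
    set v : EuclideanSpace ℝ (Fin n) := η • (u (k + 1) - d k) with hv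
    have hxv : d k + v = d (k + 1) := by rw [hiter k, hv]; module
    have hs := hsmooth (k + 1) (d k) v (hdmem k) (by rw [hxv]; exact hdmem (k + 1))
    rw [hxv] at hs
    have hip : (inner ℝ v (gradient (f (k + 1)) (d k)) : ℝ)
        = η * ((inner ℝ (u (k + 1)) (gradient (f (k + 1)) (d k)) : ℝ)
            - (inner ℝ (d k) (gradient (f (k + 1)) (d k)) : ℝ)) := by
      rw [hv, real_inner_smul_left, inner_sub_left]
    have hcg := concave_grad_ineq (f (k + 1)) (hconc (k + 1)) (hdiff (k + 1))
      (hdmem k) hdstar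
    rw [inner_sub_left] at hcg
    have hnv : ‖v‖ ^ 2 ≤ 4 * η ^ 2 := by
      have h1 : ‖u (k + 1) - d k‖ ≤ 2 := hdiam _ (hu (k + 1)) _ (hdmem k)
      have h2 : ‖v‖ = η * ‖u (k + 1) - d k‖ := by
        rw [hv, norm_smul, Real.norm_eq_abs, abs_of_pos hη0]
      have h3 : ‖u (k + 1) - d k‖ ^ 2 ≤ 4 := by
        nlinarith [norm_nonneg (u (k + 1) - d k)]
      rw [h2, mul_pow]
      nlinarith [sq_nonneg η, h3]
    have hp := hplan k
    have hdr1 := abs_le.mp (hdrift (k + 1) dstar hdstar)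
    have hdr2 := abs_le.mp (hdrift (k + 1) (d (k + 1)) (hdmem (k + 1)))
    simp only [hgdef, hc]
    nlinarith [hs, hip, hcg, hp, hdr1.1, hdr1.2, hdr2.1, hdr2.2, hnv]
  have hmain : ∀ K : ℕ, g K ≤ (1 - η) ^ K * (2 * B)
      + c * ∑ i ∈ Finset.range K, (1 - η) ^ i
      + 2 * ∑ i ∈ Finset.range K, (1 - η) ^ i * δ (K - i) := by
    intro K
    induction K with
    | zero =>
      have h1 := abs_le.mp (hfB 1 dstar hdstar)
      have h2 := abs_le.mp (hfB 1 (d 0) hd0)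
      simp only [hgdef]
      simp
      linarith [h1.2, h2.1]
    | succ K ih =>
      have h1 := hstep K
      have h2 : (1 - η) * g K ≤ (1 - η) * ((1 - η) ^ K * (2 * B)
          + c * ∑ i ∈ Finset.range K, (1 - η) ^ i
          + 2 * ∑ i ∈ Finset.range K, (1 - η) ^ i * δ (K - i)) :=
        mul_le_mul_of_nonneg_left ih (by linarith)
      have hS : ∑ i ∈ Finset.range (K + 1), (1 - η) ^ i
          = (1 - η) * ∑ i ∈ Finset.range K, (1 - η) ^ i + 1 :=
        geom_sum_succ
      have hT : ∑ i ∈ Finset.range (K + 1), (1 - η) ^ i * δ (K + 1 - i)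
          = (1 - η) * (∑ i ∈ Finset.range K, (1 - η) ^ i * δ (K - i)) + δ (K + 1) := by
        rw [Finset.sum_range_succ' (fun i => (1 - η) ^ i * δ (K + 1 - i)), Finset.mul_sum]
        congr 1
        · refine Finset.sum_congr rfl fun i _ => ?_
          have : K + 1 - (i + 1) = K - i := by omega
          rw [this, pow_succ]
          ring
        · simp
      rw [hS, hT]
      calc g (K + 1) ≤ (1 - η) * g K + c + 2 * δ (K + 1) := h1
        _ ≤ (1 - η) * ((1 - η) ^ K * (2 * B)
              + c * ∑ i ∈ Finset.range K, (1 - η) ^ i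
              + 2 * ∑ i ∈ Finset.range K, (1 - η) ^ i * δ (K - i))
            + c + 2 * δ (K + 1) := by linarith
        _ = (1 - η) ^ (K + 1) * (2 * B)
            + c * ((1 - η) * ∑ i ∈ Finset.range K, (1 - η) ^ i + 1)
            + 2 * ((1 - η) * (∑ i ∈ Finset.range K, (1 - η) ^ i * δ (K - i)) + δ (K + 1)) := by
          ring
  intro K _
  have hgK := hmain K
  -- bound each term
  have hpow : (1 - η) ^ K ≤ Real.exp (-η * K) := by
    have h1 : (1 - η) ≤ Real.exp (-η) := by
      have := Real.add_one_le_exp (-η)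
      linarith
    calc (1 - η) ^ K ≤ (Real.exp (-η)) ^ K :=
          pow_le_pow_left₀ (by linarith) h1 K
      _ = Real.exp (-η * K) := by
          rw [← Real.exp_nat_mul]
          ring_nf
  have hSpos : (0:ℝ) ≤ ∑ i ∈ Finset.range K, (1 - η) ^ i :=
    Finset.sum_nonneg fun i _ => pow_nonneg (by linarith) i
  have hSle : η * ∑ i ∈ Finset.range K, (1 - η) ^ i ≤ 1 := by
    have hne : (1 - η : ℝ) ≠ 1 := by intro h; linarith [hη0]
    have hpowpos : (0:ℝ) ≤ (1 - η) ^ K := pow_nonneg (by linarith) K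
    have key : η * ∑ i ∈ Finset.range K, (1 - η) ^ i = 1 - (1 - η) ^ K := by
      rw [geom_sum_eq hne]
      have hden : (1 - η) - 1 = -η := by ring
      rw [hden]
      rw [mul_comm, div_neg, neg_mul, div_mul_cancel₀ _ hη0.ne']
      ring
    rw [key]
    linarith
  have hcS : c * ∑ i ∈ Finset.range K, (1 - η) ^ i ≤ ε₀ + 4 * η * β := by
    rw [hc]
    nlinarith [mul_nonneg hε₀ (by linarith : (0:ℝ) ≤ 1 - η * ∑ i ∈ Finset.range K, (1 - η) ^ i),
      mul_nonneg (by positivity : (0:ℝ) ≤ β * η) (by linarith : (0:ℝ) ≤ 1 - η * ∑ i ∈ Finset.range K, (1 - η) ^ i)]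
  have hTle : ∑ i ∈ Finset.range K, (1 - η) ^ i * δ (K - i) ≤ Δ := by
    have h1 := hδsum K
    rw [Finset.sum_range_succ] at h1
    have h2 : (0:ℝ) ≤ (1 - η) ^ K * δ (K - K) := by
      simp only [Nat.sub_self]
      exact mul_nonneg (pow_nonneg (by linarith) K) hδ0
    linarith
  have hfinal : g K ≤ 2 * B * Real.exp (-η * K) + ε₀ + 4 * η * β + 2 * Δ := by
    have hpB : (1 - η) ^ K * (2 * B) ≤ 2 * B * Real.exp (-η * K) := by
      nlinarith [hpow]
    linarith
  simpa [hgdef] using hfinal
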